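/- With notation as above, for \alpha \ne 0, the coadjoint orbit of l_{\alpha,\gamma_2} = l(\alpha,0,0,0,\gamma_2,0) under N equals the set \{\alpha Z^* + t_1 Y_1^* + t_2 Y_2^* + s_1 X_1^* + (\gamma_2 + t_1 t_2/\alpha) X_2^* + s_2 X_3^* : t_1, t_2, s_1, s_2 \in \mathbb{R}\}, a 4-dimensional submanifold of \mathfrak{n}^*. -/

import Mathlib

open Matrix

set_option maxHeartbeats 2000000

/-- Elementary 4×4 real matrix. -/
def E (i j : Fin 4) : Matrix (Fin 4) (Fin 4) ℝ := Matrix.single i j 1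

/-- Element `n(z,y₁,y₂,x₁,x₂,x₃)` of 𝔫 (strictly lower triangular). -/
def nmat (z y₁ y₂ x₁ x₂ x₃ : ℝ) : Matrix (Fin 4) (Fin 4) ℝ :=
  x₁ • E 1 0 + x₂ • E 2 1 + x₃ • E 3 2 + y₁ • E 2 0 + y₂ • E 3 1 + z • E 3 0

/-- Element `l(α,β₁,β₂,γ₁,γ₂,γ₃) = αZ* + β₁Y₁* + β₂Y₂* + γ₁X₁* + γ₂X₂* + γ₃X₃*` of 𝔫*,
realized as a strictly upper triangular matrix. -/
def lmat (α β₁ β₂ γ₁ γ₂ γ₃ : ℝ) : Matrix (Fin 4) (Fin 4) ℝ :=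
  γ₁ • E 0 1 + β₁ • E 0 2 + α • E 0 3 + γ₂ • E 1 2 + β₂ • E 1 3 + γ₃ • E 2 3

/-- The coadjoint action `Ad*(g)l` of `g ∈ N` on `l ∈ 𝔫*`, expressed again as a strictly
upper triangular matrix: its coordinates are the pairings `X ↦ tr(l · g⁻¹ X g)` against
the basis `Z = E₄₁, Y₁ = E₃₁, Y₂ = E₄₂, X₁ = E₂₁, X₂ = E₃₂, X₃ = E₄₃` of 𝔫. -/
noncomputable def coadMat (g l : Matrix (Fin 4) (Fin 4) ℝ) : Matrix (Fin 4) (Fin 4) ℝ :=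
  lmat (Matrix.trace (l * (g⁻¹ * E 3 0 * g)))
       (Matrix.trace (l * (g⁻¹ * E 2 0 * g)))
       (Matrix.trace (l * (g⁻¹ * E 3 1 * g)))
       (Matrix.trace (l * (g⁻¹ * E 1 0 * g)))
       (Matrix.trace (l * (g⁻¹ * E 2 1 * g)))
       (Matrix.trace (l * (g⁻¹ * E 3 2 * g)))

lemma nmat_eq (z y₁ y₂ x₁ x₂ x₃ : ℝ) :
    nmat z y₁ y₂ x₁ x₂ x₃ = !![0,0,0,0; x₁,0,0,0; y₁,x₂,0,0; z,y₂,x₃,0] := by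
  ext i j
  fin_cases i <;> fin_cases j <;>
    simp [nmat, E, Matrix.single, Matrix.vecHead, Matrix.vecTail]

lemma nmat_pow4 (z y₁ y₂ x₁ x₂ x₃ : ℝ) : (nmat z y₁ y₂ x₁ x₂ x₃) ^ 4 = 0 := by
  rw [nmat_eq]
  simp only [pow_succ, pow_zero, one_mul]
  ext i j
  fin_cases i <;> fin_cases j <;>
    simp [Matrix.mul_apply, Fin.sum_univ_four]

lemma exp_nilp4 (A : Matrix (Fin 4) (Fin 4) ℝ) (h : A ^ 4 = 0) :
    NormedSpace.exp A = 1 + A + (2⁻¹ : ℝ) • (A * A) + (6⁻¹ : ℝ) • (A * A * A) := by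
  have : NormedSpace.exp A = ∑' n : ℕ, ((n.factorial : ℝ)⁻¹) • A ^ n := by
    rw [NormedSpace.exp_eq_tsum (𝕂 := ℝ)]
  rw [this, tsum_eq_sum (s := Finset.range 4) ?_]
  · norm_num [Finset.sum_range_succ, pow_succ, Nat.factorial]
  · intro n hn
    have h4 : 4 ≤ n := by simpa using hn
    have : A ^ n = 0 := by
      rw [show n = 4 + (n - 4) by omega, pow_add, h, zero_mul]
    simp [this]

lemma exp_nmat (z y₁ y₂ x₁ x₂ x₃ : ℝ) :
    NormedSpace.exp (nmat z y₁ y₂ x₁ x₂ x₃) =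
      !![1,0,0,0;
         x₁,1,0,0;
         y₁+x₁*x₂/2, x₂,1,0;
         z+(x₁*y₂+x₃*y₁)/2+x₁*x₂*x₃/6, y₂+x₂*x₃/2, x₃,1] := by
  rw [exp_nilp4 _ (nmat_pow4 z y₁ y₂ x₁ x₂ x₃), nmat_eq]
  ext i j
  fin_cases i <;> fin_cases j <;>
    (simp [Matrix.mul_apply, Fin.sum_univ_four, Matrix.one_apply,
       Matrix.vecHead, Matrix.vecTail]; try ring)

lemma neg_nmat (z y₁ y₂ x₁ x₂ x₃ : ℝ) :
    -(nmat z y₁ y₂ x₁ x₂ x₃) = nmat (-z) (-y₁) (-y₂) (-x₁) (-x₂) (-x₃) := by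
  simp only [nmat, neg_smul]
  abel

lemma exp_nmat_inv (z y₁ y₂ x₁ x₂ x₃ : ℝ) :
    (NormedSpace.exp (nmat z y₁ y₂ x₁ x₂ x₃))⁻¹ =
      !![1,0,0,0;
         -x₁,1,0,0;
         -y₁+x₁*x₂/2, -x₂,1,0;
         -z+(x₁*y₂+x₃*y₁)/2-x₁*x₂*x₃/6, -y₂+x₂*x₃/2, -x₃,1] := by
  rw [← Matrix.exp_neg, neg_nmat, exp_nmat]
  norm_num
  ring_nf


lemma lmat_eq (α β₁ β₂ γ₁ γ₂ γ₃ : ℝ) :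
    lmat α β₁ β₂ γ₁ γ₂ γ₃ = !![0,γ₁,β₁,α; 0,0,γ₂,β₂; 0,0,0,γ₃; 0,0,0,0] := by
  ext i j
  fin_cases i <;> fin_cases j <;>
    simp [lmat, E, Matrix.single, Matrix.vecHead, Matrix.vecTail]

lemma lmat_congr {a b c d e f a' b' c' d' e' f' : ℝ}
    (h1 : a = a') (h2 : b = b') (h3 : c = c') (h4 : d = d') (h5 : e = e') (h6 : f = f') :
    lmat a b c d e f = lmat a' b' c' d' e' f' := by
  rw [h1, h2, h3, h4, h5, h6]

lemma E_eq (i j : Fin 4) :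
    E i j = Matrix.of (fun a b => if a = i ∧ b = j then (1:ℝ) else 0) := by
  ext a b
  simp [E, Matrix.single, eq_comm]

lemma coad_formula (α γ₂ z y₁ y₂ x₁ x₂ x₃ : ℝ) :
    coadMat (NormedSpace.exp (nmat z y₁ y₂ x₁ x₂ x₃)) (lmat α 0 0 0 γ₂ 0) =
      lmat α (-(α*x₃)) (α*x₁) (-(α*y₂) + α*x₂*x₃/2) (γ₂ - α*(x₁*x₃)) (α*y₁ + α*x₁*x₂/2) := by
  rw [coadMat, exp_nmat_inv, exp_nmat]
  apply lmat_congr <;>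
  · rw [lmat_eq]
    simp [E_eq, Matrix.trace, Matrix.diag, Matrix.mul_apply, Fin.sum_univ_four,
      Matrix.vecHead, Matrix.vecTail, show (Fin.succ 2 : Fin 4) = 3 from rfl]
    try ring

/-- For `α ≠ 0`, the coadjoint orbit of `l_{α,γ₂} = l(α,0,0,0,γ₂,0)` under
`N = exp 𝔫` equals
`{αZ* + t₁Y₁* + t₂Y₂* + s₁X₁* + (γ₂ + t₁t₂/α)X₂* + s₂X₃* : t₁,t₂,s₁,s₂ ∈ ℝ}`. -/
theorem coadjoint_orbit_case_I (α γ₂ : ℝ) (hα : α ≠ 0) :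
    {l' : Matrix (Fin 4) (Fin 4) ℝ | ∃ z y₁ y₂ x₁ x₂ x₃ : ℝ,
        l' = coadMat (NormedSpace.exp (nmat z y₁ y₂ x₁ x₂ x₃)) (lmat α 0 0 0 γ₂ 0)}
      = {l' : Matrix (Fin 4) (Fin 4) ℝ | ∃ t₁ t₂ s₁ s₂ : ℝ,
          l' = lmat α t₁ t₂ s₁ (γ₂ + t₁ * t₂ / α) s₂} := by
  ext l'
  simp only [Set.mem_setOf_eq]
  constructor
  · rintro ⟨z, y₁, y₂, x₁, x₂, x₃, rfl⟩
    refine ⟨-(α*x₃), α*x₁, -(α*y₂) + α*x₂*x₃/2, α*y₁ + α*x₁*x₂/2, ?_⟩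
    rw [coad_formula]
    apply lmat_congr <;> first | rfl | (field_simp; ring)
  · rintro ⟨t₁, t₂, s₁, s₂, rfl⟩
    refine ⟨0, s₂/α, -s₁/α, t₂/α, 0, -t₁/α, ?_⟩
    rw [coad_formula]
    apply lmat_congr <;> field_simp <;> ring
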